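/- Let S ⊆ [m], let i ∈ [m], and let 𝒜 be a family of subsets of [m]. Then |S ∩ 𝒜| ≥ |S ∩ 𝒞_i(𝒜)|, where both are cardinalities of families of sets. -/

import Mathlib

/-- The compression `𝒞ᵢ(𝒜) = {Cᵢ(A) : A ∈ 𝒜} ∪ {A ∈ 𝒜 : Cᵢ(A) ∈ 𝒜}`,
where `Cᵢ(A) = A \ {i}`. -/
def compressFam {m : ℕ} (i : Fin m) (𝒜 : Finset (Finset (Fin m))) :
    Finset (Finset (Fin m)) :=
  𝒜.image (fun A => A.erase i) ∪ 𝒜.filter (fun A => A.erase i ∈ 𝒜)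

lemma inter_erase_eq {m : ℕ} (S A : Finset (Fin m)) (i : Fin m) :
    S ∩ A.erase i = (S ∩ A).erase i := by
  ext x; simp [Finset.mem_erase]; tauto

/-- If `insert i B` (with `i ∉ B`) is a trace of the compressed family, then
`B` is a trace of `𝒜`. -/
lemma aux_insert {m : ℕ} (S : Finset (Fin m)) (i : Fin m)
    (𝒜 : Finset (Finset (Fin m))) (B : Finset (Fin m)) (hiB : i ∉ B)
    (h : insert i B ∈ (compressFam i 𝒜).image (fun A => S ∩ A)) :
    B ∈ 𝒜.image (fun A => S ∩ A) := by
  obtain ⟨A', hA', hEq⟩ := Finset.mem_image.1 h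
  have hiA' : i ∈ A' := by
    have : i ∈ S ∩ A' := hEq ▸ Finset.mem_insert_self i B
    exact (Finset.mem_inter.1 this).2
  rcases Finset.mem_union.1 hA' with h1 | h1
  · obtain ⟨A, _, rfl⟩ := Finset.mem_image.1 h1
    exact absurd hiA' (Finset.notMem_erase i A)
  · obtain ⟨hA'mem, hA'er⟩ := Finset.mem_filter.1 h1
    refine Finset.mem_image.2 ⟨A'.erase i, hA'er, ?_⟩
    rw [inter_erase_eq, hEq, Finset.erase_insert hiB]

theorem card_inter_compress_le (m : ℕ) (S : Finset (Fin m)) (i : Fin m)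
    (𝒜 : Finset (Finset (Fin m))) :
    ((compressFam i 𝒜).image (fun A => S ∩ A)).card ≤
      (𝒜.image (fun A => S ∩ A)).card := by
  classical
  apply Finset.card_le_card_of_injOn
    (fun B => if B ∈ 𝒜.image (fun A => S ∩ A) then B else insert i B)
  · intro B hB
    by_cases h : B ∈ 𝒜.image (fun A => S ∩ A)
    · simp [h, hB]; exact Finset.mem_image.1 h
    · simp only [h, if_false]
      obtain ⟨A', hA', rfl⟩ := Finset.mem_image.1 hB
      rcases Finset.mem_union.1 hA' with h1 | h1
      · obtain ⟨A, hA, rfl⟩ := Finset.mem_image.1 h1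
        have hiA : i ∈ S ∩ A := by
          by_contra hi
          apply h
          refine Finset.mem_image.2 ⟨A, hA, ?_⟩
          rw [inter_erase_eq, Finset.erase_eq_of_notMem hi]
        refine Finset.mem_image.2 ⟨A, hA, ?_⟩
        rw [inter_erase_eq, Finset.insert_erase hiA]
      · exact absurd (Finset.mem_image.2 ⟨A', (Finset.mem_filter.1 h1).1, rfl⟩) h
  · intro B hB B' hB' hEq
    by_cases h : B ∈ 𝒜.image (fun A => S ∩ A) <;>
      by_cases h' : B' ∈ 𝒜.image (fun A => S ∩ A) <;>
      simp only [h, h', if_true, if_false] at hEq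
    · exact hEq
    · -- B = insert i B', B ∈ traces, B' ∉ traces
      have hiB' : i ∉ B' := by
        intro hi
        apply h'
        obtain ⟨A', hA', rfl⟩ := Finset.mem_image.1 hB'
        rcases Finset.mem_union.1 hA' with h1 | h1
        · obtain ⟨A, _, rfl⟩ := Finset.mem_image.1 h1
          exact absurd ((Finset.mem_inter.1 hi).2) (Finset.notMem_erase i A)
        · exact Finset.mem_image.2 ⟨A', (Finset.mem_filter.1 h1).1, rfl⟩
      exact absurd (aux_insert S i 𝒜 B' hiB' (hEq ▸ hB)) h'
    · have hiB : i ∉ B := by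
        intro hi
        apply h
        obtain ⟨A', hA', rfl⟩ := Finset.mem_image.1 hB
        rcases Finset.mem_union.1 hA' with h1 | h1
        · obtain ⟨A, _, rfl⟩ := Finset.mem_image.1 h1
          exact absurd ((Finset.mem_inter.1 hi).2) (Finset.notMem_erase i A)
        · exact Finset.mem_image.2 ⟨A', (Finset.mem_filter.1 h1).1, rfl⟩
      exact absurd (aux_insert S i 𝒜 B hiB (hEq ▸ hB')) h
    · have hiB : i ∉ B := by
        intro hi
        apply h
        obtain ⟨A', hA', rfl⟩ := Finset.mem_image.1 hB
        rcases Finset.mem_union.1 hA' with h1 | h1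
        · obtain ⟨A, _, rfl⟩ := Finset.mem_image.1 h1
          exact absurd ((Finset.mem_inter.1 hi).2) (Finset.notMem_erase i A)
        · exact Finset.mem_image.2 ⟨A', (Finset.mem_filter.1 h1).1, rfl⟩
      have hiB' : i ∉ B' := by
        intro hi
        apply h'
        obtain ⟨A', hA', rfl⟩ := Finset.mem_image.1 hB'
        rcases Finset.mem_union.1 hA' with h1 | h1
        · obtain ⟨A, _, rfl⟩ := Finset.mem_image.1 h1
          exact absurd ((Finset.mem_inter.1 hi).2) (Finset.notMem_erase i A)
        · exact Finset.mem_image.2 ⟨A', (Finset.mem_filter.1 h1).1, rfl⟩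
      have h2 := congrArg (fun s => Finset.erase s i) hEq
      simpa [Finset.erase_insert hiB, Finset.erase_insert hiB'] using h2
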